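/- (cc-universality on Euclidean space.) Let σ : ℝ → ℝ be continuous and suppose there exist an integer k ≥ 0 and θ > 0 such that the k-th forward difference Δ_θ^k[σ] is bounded, Lipschitz continuous, and not a constant function. Then for every m ≥ 1, every compact set Z ⊂ ℝ^m, every continuous function f : Z → ℝ, and every ε > 0, there exist n ∈ ℕ and parameters c_i ∈ ℝ, a_i ∈ ℝ^m, b_i ∈ ℝ (1 ≤ i ≤ n) such that sup_{x ∈ Z} | f(x) − Σ_{i=1}^n c_i σ(a_i·x − b_i) | < ε. -/

import Mathlib

open scoped RealInnerProductSpace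
open MeasureTheory Set Function
open scoped Convolution

/-- Forward difference operator with step `θ`: `Δ_θ^0[σ] = σ` and
`Δ_θ^{n+1}[σ](t) = Δ_θ^n[σ](t+θ) − Δ_θ^n[σ](t)`. -/
def fwdDiffIter (θ : ℝ) : ℕ → (ℝ → ℝ) → (ℝ → ℝ)
  | 0, σ => σ
  | n + 1, σ => fun t => fwdDiffIter θ n σ (t + θ) - fwdDiffIter θ n σ t

namespace CCUniv

variable (σ : ℝ → ℝ)

/-- Span of dilates and translates of `σ`. -/
def V1 : Submodule ℝ (ℝ → ℝ) :=
  Submodule.span ℝ {F | ∃ l b : ℝ, F = fun t => σ (l * t - b)}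

/-- `F` is uniformly approximable on `[-R, R]` by elements of `V1 σ`. -/
def Approx1 (R : ℝ) (F : ℝ → ℝ) : Prop :=
  ∀ ε > 0, ∃ G ∈ V1 σ, ∀ t ∈ Icc (-R) R, |F t - G t| ≤ ε

variable {σ}

theorem approx1_of_mem {R : ℝ} {F : ℝ → ℝ} (hF : F ∈ V1 σ) : Approx1 σ R F := by
  intro ε hε
  exact ⟨F, hF, fun t _ => by simp [le_of_lt hε]⟩

theorem approx1_add {R : ℝ} {F₁ F₂ : ℝ → ℝ} (h₁ : Approx1 σ R F₁) (h₂ : Approx1 σ R F₂) :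
    Approx1 σ R (F₁ + F₂) := by
  intro ε hε
  obtain ⟨G₁, hG₁, hb₁⟩ := h₁ (ε / 2) (by linarith)
  obtain ⟨G₂, hG₂, hb₂⟩ := h₂ (ε / 2) (by linarith)
  refine ⟨G₁ + G₂, Submodule.add_mem _ hG₁ hG₂, fun t ht => ?_⟩
  have := hb₁ t ht; have := hb₂ t ht
  simp only [Pi.add_apply]
  calc |F₁ t + F₂ t - (G₁ t + G₂ t)| = |(F₁ t - G₁ t) + (F₂ t - G₂ t)| := by ring_nf
    _ ≤ |F₁ t - G₁ t| + |F₂ t - G₂ t| := abs_add_le _ _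
    _ ≤ ε := by linarith

theorem approx1_smul {R : ℝ} (c : ℝ) {F : ℝ → ℝ} (h : Approx1 σ R F) :
    Approx1 σ R (c • F) := by
  intro ε hε
  obtain ⟨G, hG, hb⟩ := h (ε / (|c| + 1)) (by positivity)
  refine ⟨c • G, Submodule.smul_mem _ _ hG, fun t ht => ?_⟩
  have := hb t ht
  simp only [Pi.smul_apply, smul_eq_mul]
  have habs : |c * F t - c * G t| = |c| * |F t - G t| := by
    rw [← mul_sub, abs_mul]
  rw [habs]
  have hc1 : |c| ≤ |c| + 1 := by linarith
  calc |c| * |F t - G t| ≤ |c| * (ε / (|c| + 1)) :=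
        mul_le_mul_of_nonneg_left this (abs_nonneg c)
    _ ≤ (|c| + 1) * (ε / (|c| + 1)) := by
        apply mul_le_mul_of_nonneg_right hc1; positivity
    _ = ε := by field_simp

theorem approx1_limit {R : ℝ} {F : ℝ → ℝ}
    (h : ∀ δ > (0:ℝ), ∃ F', Approx1 σ R F' ∧ ∀ t ∈ Icc (-R) R, |F t - F' t| ≤ δ) :
    Approx1 σ R F := by
  intro ε hε
  obtain ⟨F', hF', hclose⟩ := h (ε / 2) (by linarith)
  obtain ⟨G, hG, hb⟩ := hF' (ε / 2) (by linarith)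
  refine ⟨G, hG, fun t ht => ?_⟩
  have := hclose t ht; have := hb t ht
  calc |F t - G t| = |(F t - F' t) + (F' t - G t)| := by ring_nf
    _ ≤ |F t - F' t| + |F' t - G t| := abs_add_le _ _
    _ ≤ ε := by linarith

theorem approx1_sum {R : ℝ} {ι : Type*} (s : Finset ι) (F : ι → ℝ → ℝ)
    (h : ∀ i ∈ s, Approx1 σ R (F i)) : Approx1 σ R (∑ i ∈ s, F i) := by
  classical
  induction s using Finset.induction with
  | empty => simpa using approx1_of_mem (Submodule.zero_mem _)
  | insert _ _ hx ih =>
    rw [Finset.sum_insert hx]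
    exact approx1_add (h _ (Finset.mem_insert_self _ _))
      (ih fun i hi => h i (Finset.mem_insert_of_mem hi))

theorem mem_V1_base (l b : ℝ) : (fun t => σ (l * t - b)) ∈ V1 σ :=
  Submodule.subset_span ⟨l, b, rfl⟩

theorem mem_V1_fwdDiff (θ : ℝ) (k : ℕ) (l b : ℝ) :
    (fun t => fwdDiffIter θ k σ (l * t - b)) ∈ V1 σ := by
  induction k generalizing b with
  | zero => exact mem_V1_base l b
  | succ k ih =>
    have : (fun t => fwdDiffIter θ (k+1) σ (l * t - b))
        = (fun t => fwdDiffIter θ k σ (l * t - (b - θ))) - fun t => fwdDiffIter θ k σ (l * t - b) := by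
      funext t
      show fwdDiffIter θ k σ (l * t - b + θ) - fwdDiffIter θ k σ (l * t - b) = _
      simp [sub_add_eq_add_sub]
      ring_nf
    rw [this]
    exact Submodule.sub_mem _ (ih (b - θ)) (ih b)



/-- convolution as a plain integral -/
noncomputable def conv (g ψ : ℝ → ℝ) : ℝ → ℝ := fun x => ∫ t, ψ t * g (x - t)

theorem conv_eq (g ψ : ℝ → ℝ) : conv g ψ = g ⋆[ContinuousLinearMap.lsmul ℝ ℝ, volume] ψ := by
  funext x
  rw [← convolution_flip]
  simp [convolution_def, conv, smul_eq_mul, mul_comm]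

theorem conv_hasDerivAt (g ψ : ℝ → ℝ) (hgc : Continuous g)
    (hψ : ContDiff ℝ (⊤ : ℕ∞) ψ) (hcψ : HasCompactSupport ψ) (x : ℝ) :
    HasDerivAt (conv g ψ) (conv g (deriv ψ) x) x := by
  rw [conv_eq, conv_eq]
  exact hcψ.hasDerivAt_convolution_right (ContinuousLinearMap.lsmul ℝ ℝ)
    (hgc.locallyIntegrable) (hψ.of_le (by exact_mod_cast le_top)) x

theorem conv_bound (g ψ : ℝ → ℝ) (hgc : Continuous g) (hψc : Continuous ψ)
    (hcψ : HasCompactSupport ψ) (Mg : ℝ) (hgb : ∀ x, |g x| ≤ Mg) (x : ℝ) :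
    |conv g ψ x| ≤ Mg * ∫ t, |ψ t| := by
  have hint : Integrable (fun t => ψ t * g (x - t)) := by
    apply Continuous.integrable_of_hasCompactSupport
    · exact hψc.mul (hgc.comp (continuous_const.sub continuous_id))
    · exact hcψ.mul_right
  have habs : Integrable (fun t => |ψ t|) := (hψc.integrable_of_hasCompactSupport hcψ).abs
  have hint' : Integrable (fun t => |ψ t| * |g (x - t)|) := by
    simpa [abs_mul] using hint.abs
  calc |conv g ψ x| ≤ ∫ t, |ψ t| * |g (x - t)| := by
        simpa [conv, Real.norm_eq_abs, abs_mul] using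
          norm_integral_le_integral_norm (fun t => ψ t * g (x - t))
    _ ≤ ∫ t, |ψ t| * Mg :=
        integral_mono hint' (habs.mul_const Mg)
          (fun t => mul_le_mul_of_nonneg_left (hgb _) (abs_nonneg _))
    _ = Mg * ∫ t, |ψ t| := by rw [integral_mul_const]; ring

theorem riemann_conv (g ψ : ℝ → ℝ) (hgc : Continuous g) (hψc : Continuous ψ)
    (Lg Mg Lψ Mψ T : ℝ) (hT : 0 < T)
    (hgl : ∀ x y, |g x - g y| ≤ Lg * |x - y|) (hgb : ∀ x, |g x| ≤ Mg)
    (hψl : ∀ x y, |ψ x - ψ y| ≤ Lψ * |x - y|) (hψb : ∀ x, |ψ x| ≤ Mψ)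
    (hsupp : support ψ ⊆ Ioc (-T) T) (δ : ℝ) (hδ : 0 < δ) :
    ∃ N : ℕ, 0 < N ∧ ∀ s : ℝ,
      |conv g ψ s - ∑ i ∈ Finset.range N,
        (2*T/N) * ψ (-T + i*(2*T/N)) * g (s - (-T + i*(2*T/N)))| ≤ δ := by
  have hMg : 0 ≤ Mg := le_trans (abs_nonneg _) (hgb 0)
  have hLg : 0 ≤ Lg := by
    have := hgl 0 1
    have h1 : |g 0 - g 1| ≤ Lg := by simpa using this
    exact le_trans (abs_nonneg _) h1
  have hLψ : 0 ≤ Lψ := by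
    have h1 : |ψ 0 - ψ 1| ≤ Lψ := by simpa using hψl 0 1
    exact le_trans (abs_nonneg _) h1
  have hMψ : 0 ≤ Mψ := le_trans (abs_nonneg _) (hψb 0)
  set K : ℝ := Lψ * Mg + Mψ * Lg with hK
  have hKnn : 0 ≤ K := by positivity
  obtain ⟨N, hNgt⟩ := exists_nat_gt (K * (2*T)^2 / δ)
  have hNpos : 0 < N := by
    by_contra h
    push_neg at h
    interval_cases N
    · simp at hNgt
      have : 0 ≤ K * (2*T)^2 / δ := by positivity
      linarith
  have hNR : (0:ℝ) < N := by exact_mod_cast hNpos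
  refine ⟨N, hNpos, fun s => ?_⟩
  set h : ℝ := 2*T/N with hh
  have hhpos : 0 < h := by positivity
  set u : ℕ → ℝ := fun i => -T + i * h with hu
  have hu0 : u 0 = -T := by simp [hu]
  have huN : u N = T := by
    simp only [hu, hh]
    field_simp
    ring
  have hustep : ∀ i : ℕ, u (i+1) - u i = h := by
    intro i; simp only [hu]; push_cast; ring
  set Φ : ℝ → ℝ := fun t => ψ t * g (s - t) with hΦ
  have hΦc : Continuous Φ := hψc.mul (hgc.comp (continuous_const.sub continuous_id))
  have hss : support Φ ⊆ Ioc (-T) T := by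
    intro t ht
    apply hsupp
    simp only [mem_support, hΦ] at ht ⊢
    exact fun h0 => ht (by rw [h0, zero_mul])
  have hconv : conv g ψ s = ∫ t in (-T)..T, Φ t :=
    (intervalIntegral.integral_eq_integral_of_support_subset hss).symm
  have hsplit : ∑ i ∈ Finset.range N, (∫ t in u i..u (i+1), Φ t) = ∫ t in (-T)..T, Φ t := by
    rw [intervalIntegral.sum_integral_adjacent_intervals (fun k _ => hΦc.intervalIntegrable _ _),
      hu0, huN]
  -- per-piece estimate
  have hpiece : ∀ i ∈ Finset.range N,
      |(∫ t in u i..u (i+1), Φ t) - h * ψ (u i) * g (s - u i)| ≤ K * h * h := by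
    intro i _
    have hconst : h * ψ (u i) * g (s - u i) = ∫ _t in u i..u (i+1), ψ (u i) * g (s - u i) := by
      rw [intervalIntegral.integral_const, hustep i, smul_eq_mul]
      ring
    rw [hconst, ← intervalIntegral.integral_sub (hΦc.intervalIntegrable _ _)
      (intervalIntegrable_const)]
    have hui : u i < u (i+1) := by
      have := hustep i; linarith
    have key : ∀ x ∈ Set.uIoc (u i) (u (i+1)), ‖Φ x - ψ (u i) * g (s - u i)‖ ≤ K * h := by
      intro x hx
      rw [uIoc_of_le (le_of_lt hui)] at hx
      have hx1 : |x - u i| ≤ h := by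
        have h1 := hx.1
        have h2 := hx.2
        have := hustep i
        rw [abs_le]; constructor <;> linarith
      have e1 : |ψ x - ψ (u i)| ≤ Lψ * h := by
        calc |ψ x - ψ (u i)| ≤ Lψ * |x - u i| := hψl _ _
          _ ≤ Lψ * h := by nlinarith
      have e2 : |g (s - x) - g (s - u i)| ≤ Lg * h := by
        calc |g (s - x) - g (s - u i)| ≤ Lg * |s - x - (s - u i)| := hgl _ _
          _ ≤ Lg * h := by
            have : |s - x - (s - u i)| = |x - u i| := by
              rw [← abs_neg]; ring_nf
            rw [this]; nlinarith
      rw [Real.norm_eq_abs]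
      calc |Φ x - ψ (u i) * g (s - u i)|
          = |(ψ x - ψ (u i)) * g (s - x) + ψ (u i) * (g (s - x) - g (s - u i))| := by
            simp only [hΦ]; ring_nf
        _ ≤ |(ψ x - ψ (u i)) * g (s - x)| + |ψ (u i) * (g (s - x) - g (s - u i))| := abs_add_le _ _
        _ = |ψ x - ψ (u i)| * |g (s - x)| + |ψ (u i)| * |g (s - x) - g (s - u i)| := by
            rw [abs_mul, abs_mul]
        _ ≤ (Lψ * h) * Mg + Mψ * (Lg * h) := by
            have := hgb (s - x)
            have := hψb (u i)
            have h1 : |ψ x - ψ (u i)| * |g (s - x)| ≤ (Lψ * h) * Mg := by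
              apply mul_le_mul e1 (hgb _) (abs_nonneg _) (by positivity)
            have h2 : |ψ (u i)| * |g (s - x) - g (s - u i)| ≤ Mψ * (Lg * h) := by
              apply mul_le_mul (hψb _) e2 (abs_nonneg _) hMψ
            linarith
        _ = K * h := by rw [hK]; ring
    have := intervalIntegral.norm_integral_le_of_norm_le_const key
    rw [Real.norm_eq_abs] at this
    calc |∫ x in u i..u (i+1), (Φ x - ψ (u i) * g (s - u i))| ≤ K * h * |u (i+1) - u i| := this
      _ = K * h * h := by rw [hustep i, abs_of_pos hhpos]
  -- combine
  have hsum : conv g ψ s - ∑ i ∈ Finset.range N, (2*T/N) * ψ (u i) * g (s - u i)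
      = ∑ i ∈ Finset.range N, ((∫ t in u i..u (i+1), Φ t) - h * ψ (u i) * g (s - u i)) := by
    rw [Finset.sum_sub_distrib, hsplit, ← hconv, hh]
  calc |conv g ψ s - ∑ i ∈ Finset.range N, (2*T/N) * ψ (-T + i*(2*T/N)) * g (s - (-T + i*(2*T/N)))|
      = |∑ i ∈ Finset.range N, ((∫ t in u i..u (i+1), Φ t) - h * ψ (u i) * g (s - u i))| := by
        rw [← hsum]
    _ ≤ ∑ i ∈ Finset.range N, |(∫ t in u i..u (i+1), Φ t) - h * ψ (u i) * g (s - u i)| :=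
        Finset.abs_sum_le_sum_abs _ _
    _ ≤ ∑ _i ∈ Finset.range N, K * h * h := Finset.sum_le_sum hpiece
    _ = N * (K * h * h) := by rw [Finset.sum_const, Finset.card_range]; ring
    _ ≤ δ := by
      have hNe : (N:ℝ) * (K * h * h) = K * (2*T)^2 / N := by
        rw [hh]; field_simp
      rw [hNe]
      rw [div_le_iff₀ hNR]
      rw [div_lt_iff₀ hδ] at hNgt
      linarith



theorem lip_of_deriv_bound (F F' : ℝ → ℝ) (hF : ∀ x, HasDerivAt F (F' x) x) (K : ℝ)
    (hK : ∀ x, |F' x| ≤ K) : ∀ x y, |F x - F y| ≤ K * |x - y| := by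
  intro x y
  have := Convex.norm_image_sub_le_of_norm_hasDerivWithin_le
    (f := F) (f' := F') (s := univ) (fun z _ => (hF z).hasDerivWithinAt)
    (fun z _ => by simpa [Real.norm_eq_abs] using hK z) convex_univ (mem_univ y) (mem_univ x)
  simpa [Real.norm_eq_abs] using this

theorem taylor_bound (F F' : ℝ → ℝ) (hF : ∀ x, HasDerivAt F (F' x) x) (K : ℝ) (hK : 0 ≤ K)
    (hL : ∀ x y, |F' x - F' y| ≤ K * |x - y|) (s u : ℝ) :
    |F (s + u) - F s - u * F' s| ≤ K * u ^ 2 := by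
  set G : ℝ → ℝ := fun v => F (s + v) - v * F' s with hGdef
  have hG' : ∀ v, HasDerivAt G (F' (s + v) - F' s) v := by
    intro v
    have h1 : HasDerivAt (fun w => F (s + w)) (F' (s + v)) v := by
      exact ((hF (s + v)).comp v ((hasDerivAt_id v).const_add s)).congr_deriv (by simp)
    exact (h1.sub ((hasDerivAt_id v).mul_const (F' s))).congr_deriv (by simp)
  have bound : ∀ v ∈ uIcc (0:ℝ) u, ‖F' (s + v) - F' s‖ ≤ K * |u| := by
    intro v hv
    have hvu : |v| ≤ |u| := by
      rcases le_total 0 u with h | h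
      · rw [uIcc_of_le h] at hv
        rw [abs_of_nonneg h, abs_le]
        exact ⟨by linarith [hv.1], hv.2⟩
      · rw [uIcc_of_ge h] at hv
        rw [abs_of_nonpos h, abs_le]
        exact ⟨by linarith [hv.1], by linarith [hv.2]⟩
    calc ‖F' (s + v) - F' s‖ = |F' (s + v) - F' s| := rfl
      _ ≤ K * |s + v - s| := hL _ _
      _ = K * |v| := by rw [add_sub_cancel_left]
      _ ≤ K * |u| := mul_le_mul_of_nonneg_left hvu hK
  have hmain := Convex.norm_image_sub_le_of_norm_hasDerivWithin_le
    (f := G) (f' := fun v => F' (s + v) - F' s) (s := uIcc (0:ℝ) u)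
    (fun v _ => (hG' v).hasDerivWithinAt) bound (convex_uIcc 0 u) left_mem_uIcc right_mem_uIcc
  have : ‖G u - G 0‖ = |F (s + u) - F s - u * F' s| := by
    simp only [hGdef, Real.norm_eq_abs]
    ring_nf
  rw [this] at hmain
  calc |F (s + u) - F s - u * F' s| ≤ K * |u| * ‖u - 0‖ := hmain
    _ = K * u ^ 2 := by
      rw [sub_zero, Real.norm_eq_abs, mul_assoc, abs_mul_abs_self]
      ring

theorem bounded_of_const_deriv (F : ℝ → ℝ) (c B : ℝ) (hF : ∀ x, HasDerivAt F c x)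
    (hB : ∀ x, |F x| ≤ B) : ∀ x, F x = F 0 := by
  have key : ∀ x, F x = F 0 + c * x := by
    intro x
    set G : ℝ → ℝ := fun x => F x - c * x with hGdef
    have hG' : ∀ y, HasDerivAt G 0 y := by
      intro y
      exact ((hF y).sub ((hasDerivAt_id y).const_mul c)).congr_deriv (by simp)
    have hconst : G x = G 0 := by
      have hdiff : Differentiable ℝ G := fun y => (hG' y).differentiableAt
      have hd0 : ∀ y, deriv G y = 0 := fun y => (hG' y).deriv
      exact is_const_of_deriv_eq_zero hdiff hd0 x 0
    simp only [hGdef] at hconst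
    linarith [hconst]
  have hB0 : 0 ≤ B := le_trans (abs_nonneg _) (hB 0)
  have hc : c = 0 := by
    by_contra hc
    have hcpos : 0 < |c| := abs_pos.mpr hc
    set x : ℝ := (B + |F 0| + 1) / |c| with hx
    have hxnn : 0 ≤ x := div_nonneg (by linarith [abs_nonneg (F 0)]) (le_of_lt hcpos)
    have h1 : |F x| ≤ B := hB x
    have h2 : F x = F 0 + c * x := key x
    have h3 : |c * x| = B + |F 0| + 1 := by
      rw [abs_mul, abs_of_nonneg hxnn, hx]
      field_simp
    have h4 : |c * x| ≤ |F x| + |F 0| := by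
      have : c * x = F x - F 0 := by linarith
      rw [this]
      exact abs_sub _ _
    linarith
  intro x
  rw [key x, hc]
  ring


theorem approx1_conv_affine {σ : ℝ → ℝ} (g : ℝ → ℝ)
    (hgc : Continuous g) (Lg Mg : ℝ)
    (hgl : ∀ x y, |g x - g y| ≤ Lg * |x - y|) (hgb : ∀ x, |g x| ≤ Mg)
    (hgV : ∀ l b : ℝ, (fun t => g (l * t - b)) ∈ V1 σ)
    (ψ : ℝ → ℝ) (hψc : Continuous ψ) (Lψ Mψ T : ℝ) (hT : 0 < T)
    (hψl : ∀ x y, |ψ x - ψ y| ≤ Lψ * |x - y|) (hψb : ∀ x, |ψ x| ≤ Mψ)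
    (hsupp : support ψ ⊆ Ioc (-T) T) (R l b : ℝ) :
    Approx1 σ R (fun t => conv g ψ (l * t - b)) := by
  apply approx1_limit
  intro δ hδ
  obtain ⟨N, hN, hest⟩ := riemann_conv g ψ hgc hψc Lg Mg Lψ Mψ T hT hgl hgb hψl hψb hsupp δ hδ
  refine ⟨fun t => ∑ i ∈ Finset.range N,
      (2*T/N) * ψ (-T + i*(2*T/N)) * g ((l*t - b) - (-T + i*(2*T/N))), ?_, ?_⟩
  · apply approx1_of_mem
    have hrw : (fun t => ∑ i ∈ Finset.range N,
        (2*T/N) * ψ (-T + i*(2*T/N)) * g ((l*t - b) - (-T + i*(2*T/N))))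
        = ∑ i ∈ Finset.range N, (fun t =>
        (2*T/N) * ψ (-T + i*(2*T/N)) * g ((l*t - b) - (-T + i*(2*T/N)))) := by
      funext t
      simp [Finset.sum_apply]
    rw [hrw]
    apply Submodule.sum_mem
    intro i _
    have hterm : (fun t => (2*T/N) * ψ (-T + i*(2*T/N)) * g ((l*t - b) - (-T + i*(2*T/N))))
        = ((2*T/N) * ψ (-T + i*(2*T/N))) • (fun t => g (l*t - (b + (-T + i*(2*T/N))))) := by
      funext t
      simp only [Pi.smul_apply, smul_eq_mul, sub_sub]
    rw [hterm]
    exact Submodule.smul_mem _ _ (hgV _ _)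
  · intro t _
    exact hest (l * t - b)

theorem approx1_monomial {σ : ℝ → ℝ} (g : ℝ → ℝ) (hgc : Continuous g)
    (Lg Mg : ℝ) (hgl : ∀ x y, |g x - g y| ≤ Lg * |x - y|) (hgb : ∀ x, |g x| ≤ Mg)
    (hgnc : ∃ t₁ t₂ : ℝ, g t₁ ≠ g t₂)
    (hgV : ∀ l b : ℝ, (fun t => g (l * t - b)) ∈ V1 σ)
    (R : ℝ) (hR : 0 < R) (n : ℕ) : Approx1 σ R (fun t => t ^ n) := by
  have hLg0 : 0 ≤ Lg := by
    have h1 : |g 0 - g 1| ≤ Lg := by simpa using hgl 0 1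
    exact le_trans (abs_nonneg _) h1
  obtain ⟨t₁, t₂, hne⟩ := hgnc
  set ρ : ℝ := |g t₁ - g t₂| with hρdef
  have hρ : 0 < ρ := abs_pos.mpr (sub_ne_zero.mpr hne)
  set r : ℝ := ρ / (2 * (Lg + 1)) with hrdef
  have hr : 0 < r := by positivity
  set bump : ContDiffBump (0:ℝ) := ⟨r/2, r, by positivity, by linarith⟩ with hbump
  set ψ0 : ℝ → ℝ := bump.normed volume with hψ0def
  have hψ0s : ContDiff ℝ (⊤ : ℕ∞) ψ0 := bump.contDiff_normed
  have hψ0cs : HasCompactSupport ψ0 := bump.hasCompactSupport_normed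
  set ψ : ℕ → ℝ → ℝ := fun m => deriv^[m] ψ0 with hψdef
  have hψs : ∀ m, ContDiff ℝ (⊤ : ℕ∞) (ψ m) := fun m => ContDiff.iterate_deriv m hψ0s
  have hψcs : ∀ m, HasCompactSupport (ψ m) := by
    intro m
    induction m with
    | zero => exact hψ0cs
    | succ m ih =>
      have : ψ (m+1) = deriv (ψ m) := Function.iterate_succ_apply' deriv m ψ0
      rw [this]
      exact ih.deriv
  have hψder : ∀ m x, HasDerivAt (ψ m) (ψ (m+1) x) x := by
    intro m x
    have h1 := ((hψs m).differentiable (by simp) x).hasDerivAt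
    have h2 : ψ (m+1) = deriv (ψ m) := Function.iterate_succ_apply' deriv m ψ0
    rw [h2]
    exact h1
  have htsup : ∀ m, tsupport (ψ m) ⊆ Icc (-r) r := by
    intro m
    induction m with
    | zero =>
      show tsupport ψ0 ⊆ Icc (-r) r
      have hout : bump.rOut = r := rfl
      have h1 : tsupport ψ0 = Metric.closedBall (0:ℝ) r := by
        rw [bump.tsupport_normed_eq, hout]
      rw [h1, Real.closedBall_eq_Icc]
      simp
    | succ m ih =>
      have h1 : ψ (m+1) = deriv (ψ m) := Function.iterate_succ_apply' deriv m ψ0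
      rw [h1]
      refine le_trans (closure_minimal (support_deriv_subset) (isClosed_tsupport _)) ih
  have hψT : ∀ m, support (ψ m) ⊆ Ioc (-(r+1)) (r+1) := by
    intro m t ht
    have := htsup m (subset_tsupport _ ht)
    exact ⟨by linarith [this.1], by linarith [this.2]⟩
  have hψBex : ∀ m, ∃ C, ∀ x, |ψ m x| ≤ C := by
    intro m
    simpa [Real.norm_eq_abs] using (hψcs m).exists_bound_of_continuous ((hψs m).continuous)
  choose Mψ hMψ using hψBex
  have hψlip : ∀ m, ∀ x y, |ψ m x - ψ m y| ≤ Mψ (m+1) * |x - y| :=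
    fun m => lip_of_deriv_bound (ψ m) (ψ (m+1)) (hψder m) _ (hMψ (m+1))
  set H : ℕ → ℝ → ℝ := fun m => conv g (ψ m) with hHdef
  have hHder : ∀ m x, HasDerivAt (H m) (H (m+1) x) x := by
    intro m x
    have h1 := conv_hasDerivAt g (ψ m) hgc (hψs m) (hψcs m) x
    have h2 : ψ (m+1) = deriv (ψ m) := Function.iterate_succ_apply' deriv m ψ0
    simp only [hHdef]
    rw [h2]
    exact h1
  have hHbex : ∀ m, ∃ B, 0 ≤ B ∧ ∀ x, |H m x| ≤ B := by
    intro m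
    have hb := conv_bound g (ψ m) hgc ((hψs m).continuous) (hψcs m) Mg hgb
    exact ⟨Mg * ∫ t, |ψ m t|, le_trans (abs_nonneg _) (hb 0), hb⟩
  choose BH hBH0 hBH using hHbex
  have hHlip : ∀ m, ∀ x y, |H m x - H m y| ≤ BH (m+1) * |x - y| :=
    fun m => lip_of_deriv_bound (H m) (H (m+1)) (hHder m) _ (hBH (m+1))
  have happrox : ∀ m l b, Approx1 σ R (fun t => H m (l * t - b)) :=
    fun m l b => approx1_conv_affine g hgc Lg Mg hgl hgb hgV (ψ m) ((hψs m).continuous)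
      (Mψ (m+1)) (Mψ m) (r+1) (by positivity) (hψlip m) (hMψ m) (hψT m) R l b
  -- `H 0` is close to `g`, hence non-constant
  have hclose : ∀ s, |H 0 s - g s| ≤ Lg * r := by
    intro s
    have hint1 : Integrable (fun t => ψ0 t * g (s - t)) := by
      apply Continuous.integrable_of_hasCompactSupport
      · exact hψ0s.continuous.mul (hgc.comp (continuous_const.sub continuous_id))
      · exact hψ0cs.mul_right
    have hint2 : Integrable (fun t => ψ0 t * g s) :=
      (hψ0s.continuous.integrable_of_hasCompactSupport hψ0cs).mul_const _
    have hintF : Integrable (fun t => ψ0 t * (g (s - t) - g s)) := by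
      have := hint1.sub hint2
      simp only [mul_sub]
      exact this
    have hsub : H 0 s - g s = ∫ t, ψ0 t * (g (s - t) - g s) := by
      have h1 : ∫ t, ψ0 t * g s = g s := by
        rw [integral_mul_const, bump.integral_normed, one_mul]
      have h0 : H 0 s = ∫ t, ψ0 t * g (s - t) := rfl
      rw [h0]
      rw [show (fun t => ψ0 t * (g (s - t) - g s))
          = fun t => ψ0 t * g (s - t) - ψ0 t * g s from funext fun t => by ring]
      rw [integral_sub hint1 hint2, h1]
    rw [hsub]
    have hptwise : ∀ t, |ψ0 t| * |g (s - t) - g s| ≤ ψ0 t * (Lg * r) := by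
      intro t
      by_cases ht : ψ0 t = 0
      · simp [ht]
      · have htsupp : t ∈ support ψ0 := ht
        rw [bump.support_normed_eq] at htsupp
        have hout : bump.rOut = r := rfl
        have htr : |t| < r := by
          have := htsupp
          rw [Metric.mem_ball, Real.dist_eq, sub_zero, hout] at this
          exact this
        rw [abs_of_nonneg (bump.nonneg_normed t)]
        apply mul_le_mul_of_nonneg_left _ (bump.nonneg_normed t)
        calc |g (s - t) - g s| ≤ Lg * |s - t - s| := hgl _ _
          _ = Lg * |t| := by rw [show s - t - s = -t by ring, abs_neg]
          _ ≤ Lg * r := mul_le_mul_of_nonneg_left (le_of_lt htr) hLg0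
    have hintFabs : Integrable (fun t => |ψ0 t| * |g (s - t) - g s|) := by
      simpa [abs_mul] using hintF.abs
    calc |∫ t, ψ0 t * (g (s - t) - g s)| ≤ ∫ t, |ψ0 t| * |g (s - t) - g s| := by
          simpa [Real.norm_eq_abs, abs_mul] using
            norm_integral_le_integral_norm (fun t => ψ0 t * (g (s - t) - g s))
      _ ≤ ∫ t, ψ0 t * (Lg * r) := by
          apply integral_mono hintFabs
            ((hψ0s.continuous.integrable_of_hasCompactSupport hψ0cs).mul_const _)
          exact hptwise
      _ = Lg * r := by rw [integral_mul_const, bump.integral_normed, one_mul]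
  have hH0nc : H 0 t₁ ≠ H 0 t₂ := by
    intro heq
    have h1 := hclose t₁
    have h2 := hclose t₂
    have hrρ : r * (2 * (Lg + 1)) = ρ := by
      rw [hrdef]; field_simp
    have htri : ρ ≤ |H 0 t₁ - g t₁| + |H 0 t₂ - g t₂| := by
      have : g t₁ - g t₂ = -(H 0 t₁ - g t₁) + (H 0 t₂ - g t₂) := by rw [heq]; ring
      calc ρ = |g t₁ - g t₂| := rfl
        _ = |(-(H 0 t₁ - g t₁)) + (H 0 t₂ - g t₂)| := by rw [this]
        _ ≤ |(-(H 0 t₁ - g t₁))| + |H 0 t₂ - g t₂| := abs_add_le _ _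
        _ = |H 0 t₁ - g t₁| + |H 0 t₂ - g t₂| := by rw [abs_neg]
    nlinarith
  -- no `H m` vanishes identically
  have hnonvanish : ∀ m, ∃ b0, H m b0 ≠ 0 := by
    intro m
    by_contra hcon
    push_neg at hcon
    have down : ∀ j, (∃ c, ∀ x, H (j+1) x = c) → (∃ c, ∀ x, H j x = c) := by
      rintro j ⟨c, hc⟩
      have hder : ∀ x, HasDerivAt (H j) c x := fun x => hc x ▸ hHder j x
      exact ⟨H j 0, bounded_of_const_deriv (H j) c (BH j) hder (hBH j)⟩
    have hchain : ∀ i : ℕ, i ≤ m → ∃ c, ∀ x, H (m - i) x = c := by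
      intro i
      induction i with
      | zero => intro _; exact ⟨0, by simpa using hcon⟩
      | succ i ih =>
        intro hi
        have h1 := ih (le_of_lt hi)
        have h2 : m - i = (m - (i+1)) + 1 := by omega
        rw [h2] at h1
        exact down _ h1
    obtain ⟨c, hc⟩ := hchain m le_rfl
    simp only [Nat.sub_self] at hc
    exact hH0nc (by rw [hc t₁, hc t₂])
  -- main induction
  have claim : ∀ m l b, Approx1 σ R (fun t => t ^ m * H m (l * t - b)) := by
    intro m
    induction m with
    | zero => intro l b; simpa using happrox 0 l b
    | succ m ih =>
      intro l b
      apply approx1_limit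
      intro δ hδ
      set K : ℝ := BH (m+2) with hKdef
      have hK0 : 0 ≤ K := hBH0 (m+2)
      set d : ℝ := min (δ / (R^(m+2) * K + 1)) 1 with hddef
      have hd0 : 0 < d := lt_min (by positivity) one_pos
      refine ⟨fun t => (1/d) * (t^m * H m ((l+d)*t - b)) - (1/d) * (t^m * H m (l*t - b)),
        ?_, ?_⟩
      · have h1 := approx1_smul (σ := σ) (1/d) (ih (l+d) b)
        have h2 := approx1_smul (σ := σ) (-(1/d)) (ih l b)
        have hrw : (fun t => (1/d) * (t^m * H m ((l+d)*t - b)) - (1/d) * (t^m * H m (l*t - b)))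
            = ((1/d) • fun t => t^m * H m ((l+d)*t - b))
              + ((-(1/d)) • fun t => t^m * H m (l*t - b)) := by
          funext t
          simp only [Pi.add_apply, Pi.smul_apply, smul_eq_mul]
          ring
        rw [hrw]
        exact approx1_add h1 h2
      · intro t ht
        have htR : |t| ≤ R := abs_le.mpr ⟨ht.1, ht.2⟩
        have key := taylor_bound (H m) (H (m+1)) (hHder m) K hK0 (hHlip (m+1)) (l*t - b) (d*t)
        have harg : l*t - b + d*t = (l+d)*t - b := by ring
        rw [harg] at key
        have expand : t^(m+1) * H (m+1) (l*t - b)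
            - ((1/d) * (t^m * H m ((l+d)*t - b)) - (1/d) * (t^m * H m (l*t - b)))
            = -((1/d) * t^m * (H m ((l+d)*t - b) - H m (l*t - b) - d*t * H (m+1) (l*t - b))) := by
          field_simp
          ring
        rw [expand, abs_neg]
        have habs : |(1/d) * t^m * (H m ((l+d)*t - b) - H m (l*t - b) - d*t * H (m+1) (l*t - b))|
            = (1/d) * |t|^m * |H m ((l+d)*t - b) - H m (l*t - b) - d*t * H (m+1) (l*t - b)| := by
          rw [abs_mul, abs_mul, abs_pow, abs_of_pos (by positivity : (0:ℝ) < 1/d)]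
        rw [habs]
        have htRm : |t|^m ≤ R^m := pow_le_pow_left₀ (abs_nonneg t) htR m
        have ht2 : t^2 ≤ R^2 := by
          rw [← sq_abs]
          exact pow_le_pow_left₀ (abs_nonneg t) htR 2
        have hd1 : d ≤ δ / (R^(m+2) * K + 1) := min_le_left _ _
        calc (1/d) * |t|^m * |H m ((l+d)*t - b) - H m (l*t - b) - d*t * H (m+1) (l*t - b)|
            ≤ (1/d) * |t|^m * (K * (d*t)^2) := by
              apply mul_le_mul_of_nonneg_left key (by positivity)
          _ = K * |t|^m * t^2 * d := by
              field_simp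
          _ ≤ K * R^m * R^2 * d := by
              have e1 : K * |t|^m * t^2 ≤ K * R^m * R^2 := by
                have e2 : |t|^m * t^2 ≤ R^m * R^2 := by
                  apply mul_le_mul htRm ht2 (by positivity) (by positivity)
                calc K * |t|^m * t^2 = K * (|t|^m * t^2) := by ring
                  _ ≤ K * (R^m * R^2) := mul_le_mul_of_nonneg_left e2 hK0
                  _ = K * R^m * R^2 := by ring
              exact mul_le_mul_of_nonneg_right e1 (le_of_lt hd0)
          _ = (R^(m+2) * K) * d := by ring
          _ ≤ (R^(m+2) * K) * (δ / (R^(m+2) * K + 1)) :=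
              mul_le_mul_of_nonneg_left hd1 (by positivity)
          _ ≤ δ := by
              rw [mul_comm, div_mul_eq_mul_div, div_le_iff₀ (by positivity)]
              nlinarith [hδ, hK0, pow_nonneg (le_of_lt hR) (m+2)]
  -- conclude
  obtain ⟨b0, hb0⟩ := hnonvanish n
  have h1 := claim n 0 (-b0)
  have h2 : (fun t : ℝ => t ^ n * H n (0 * t - -b0)) = fun t : ℝ => t ^ n * H n b0 := by
    funext t
    norm_num
  rw [h2] at h1
  have h3 := approx1_smul (σ := σ) (H n b0)⁻¹ h1
  have h4 : ((H n b0)⁻¹ • fun t : ℝ => t ^ n * H n b0) = fun t : ℝ => t ^ n := by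
    funext t
    simp only [Pi.smul_apply, smul_eq_mul]
    field_simp
  rw [h4] at h3
  exact h3

theorem approx1_of_monomials {σ : ℝ → ℝ} {R : ℝ}
    (hmono : ∀ n : ℕ, Approx1 σ R (fun t => t ^ n)) (p : Polynomial ℝ) :
    Approx1 σ R (fun t => p.eval t) := by
  have hrw : (fun t => p.eval t)
      = ∑ i ∈ Finset.range (p.natDegree + 1), (p.coeff i) • (fun t : ℝ => t ^ i) := by
    funext t
    rw [Finset.sum_apply]
    simp only [Pi.smul_apply, smul_eq_mul]
    exact Polynomial.eval_eq_sum_range t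
  rw [hrw]
  exact approx1_sum _ _ (fun i _ => approx1_smul _ (hmono i))

theorem approx1_continuousOn {σ : ℝ → ℝ} {R : ℝ}
    (hmono : ∀ n : ℕ, Approx1 σ R (fun t => t ^ n)) (F : ℝ → ℝ)
    (hF : ContinuousOn F (Icc (-R) R)) : Approx1 σ R F := by
  apply approx1_limit
  intro δ hδ
  obtain ⟨p, hp⟩ := exists_polynomial_near_of_continuousOn (-R) R F hF δ hδ
  refine ⟨fun t => p.eval t, approx1_of_monomials hmono p, fun t ht => ?_⟩
  rw [abs_sub_comm]
  exact le_of_lt (hp t ht)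

theorem fwdDiffIter_continuous (θ : ℝ) (k : ℕ) (σ : ℝ → ℝ) (h : Continuous σ) :
    Continuous (fwdDiffIter θ k σ) := by
  induction k with
  | zero => exact h
  | succ k ih =>
    show Continuous (fun t => fwdDiffIter θ k σ (t + θ) - fwdDiffIter θ k σ t)
    exact (ih.comp (continuous_id.add continuous_const)).sub ih

/-- The multivariate span. -/
def VZ (σ : ℝ → ℝ) (m : ℕ) : Submodule ℝ (EuclideanSpace ℝ (Fin m) → ℝ) :=
  Submodule.span ℝ {F | ∃ (a : EuclideanSpace ℝ (Fin m)) (b : ℝ),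
    F = fun x => σ (⟪a, x⟫ - b)}

theorem mem_VZ_comp {σ : ℝ → ℝ} {m : ℕ} {G : ℝ → ℝ} (hG : G ∈ V1 σ)
    (a : EuclideanSpace ℝ (Fin m)) : (fun x => G ⟪a, x⟫) ∈ VZ σ m := by
  induction hG using Submodule.span_induction with
  | mem F hF =>
    obtain ⟨l, b, rfl⟩ := hF
    refine Submodule.subset_span ⟨l • a, b, funext fun x => ?_⟩
    rw [real_inner_smul_left]
  | zero => exact Submodule.zero_mem _
  | add F F' hF hF' ihF ihF' =>
    have : (fun x => (F + F') ⟪a, x⟫)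
        = (fun x => F ⟪a, x⟫) + fun x => F' ⟪a, x⟫ := rfl
    rw [this]
    exact Submodule.add_mem _ ihF ihF'
  | smul c F hF ih =>
    have : (fun x => (c • F) ⟪a, x⟫) = c • fun x => F ⟪a, x⟫ := rfl
    rw [this]
    exact Submodule.smul_mem _ _ ih

end CCUniv

theorem cc_universality_euclidean (σ : ℝ → ℝ) (hσc : Continuous σ)
    (k : ℕ) (θ : ℝ) (hθ : 0 < θ)
    (hbdd : ∃ M : ℝ, ∀ t : ℝ, |fwdDiffIter θ k σ t| ≤ M)
    (hlip : ∃ L : NNReal, LipschitzWith L (fwdDiffIter θ k σ))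
    (hnc : ¬ ∃ c : ℝ, ∀ t : ℝ, fwdDiffIter θ k σ t = c)
    (m : ℕ) (hm : 1 ≤ m) (Z : Set (EuclideanSpace ℝ (Fin m))) (hZ : IsCompact Z)
    (f : EuclideanSpace ℝ (Fin m) → ℝ) (hf : ContinuousOn f Z)
    (ε : ℝ) (hε : 0 < ε) :
    ∃ (n : ℕ) (c : Fin n → ℝ) (a : Fin n → EuclideanSpace ℝ (Fin m)) (b : Fin n → ℝ),
      ∀ x ∈ Z, |f x - ∑ i : Fin n, c i * σ (⟪a i, x⟫ - b i)| < ε := by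
  classical
  obtain ⟨Mg, hgb⟩ := hbdd
  obtain ⟨L, hL⟩ := hlip
  have hgl : ∀ x y, |fwdDiffIter θ k σ x - fwdDiffIter θ k σ y| ≤ (L : ℝ) * |x - y| := by
    intro x y
    have := hL.dist_le_mul x y
    rwa [Real.dist_eq, Real.dist_eq] at this
  have hgc : Continuous (fwdDiffIter θ k σ) := CCUniv.fwdDiffIter_continuous θ k σ hσc
  push_neg at hnc
  obtain ⟨t₁, ht₁⟩ := hnc (fwdDiffIter θ k σ 0)
  have hgnc : ∃ a b : ℝ, fwdDiffIter θ k σ a ≠ fwdDiffIter θ k σ b := ⟨t₁, 0, ht₁⟩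
  have hone : ∀ R : ℝ, 0 < R → ∀ F : ℝ → ℝ, ContinuousOn F (Set.Icc (-R) R) →
      CCUniv.Approx1 σ R F := by
    intro R hR F hF
    apply CCUniv.approx1_continuousOn _ F hF
    intro n
    exact CCUniv.approx1_monomial (fwdDiffIter θ k σ) hgc (L : ℝ) Mg hgl hgb hgnc
      (CCUniv.mem_V1_fwdDiff θ k) R hR n
  obtain ⟨CZ, hCZ⟩ := hZ.isBounded.exists_norm_le
  -- each exponential ridge function is approximable
  have hexp : ∀ a : EuclideanSpace ℝ (Fin m), ∀ δ > (0:ℝ), ∃ G ∈ CCUniv.VZ σ m,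
      ∀ x ∈ Z, |Real.exp ⟪a, x⟫ - G x| ≤ δ := by
    intro a δ hδ
    set R : ℝ := ‖a‖ * max CZ 0 + 1 with hRdef
    have hR : 0 < R := by positivity
    obtain ⟨G1, hG1mem, hG1⟩ := hone R hR Real.exp Real.continuous_exp.continuousOn δ hδ
    refine ⟨fun x => G1 ⟪a, x⟫, CCUniv.mem_VZ_comp hG1mem a, fun x hx => ?_⟩
    have hxR : ⟪a, x⟫ ∈ Set.Icc (-R) R := by
      have h1 : |⟪a, x⟫| ≤ ‖a‖ * ‖x‖ := abs_real_inner_le_norm a x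
      have h2 : ‖x‖ ≤ max CZ 0 := le_trans (hCZ x hx) (le_max_left _ _)
      have h3 : ‖a‖ * ‖x‖ ≤ ‖a‖ * max CZ 0 := mul_le_mul_of_nonneg_left h2 (norm_nonneg a)
      have h4 : |⟪a, x⟫| ≤ R := by rw [hRdef]; linarith [le_trans h1 h3]
      exact abs_le.mp h4
    exact hG1 _ hxR
  -- Stone–Weierstrass with exponentials
  haveI : CompactSpace Z := isCompact_iff_compactSpace.mp hZ
  set expC : EuclideanSpace ℝ (Fin m) → C(Z, ℝ) := fun a =>
    ⟨fun z => Real.exp ⟪a, (z : EuclideanSpace ℝ (Fin m))⟫,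
      Real.continuous_exp.comp (continuous_const.inner continuous_subtype_val)⟩ with hexpC
  set expSet : Set C(Z, ℝ) := Set.range expC with hexpSet
  have hmulmem : ∀ F ∈ expSet, ∀ G ∈ expSet, F * G ∈ expSet := by
    rintro _ ⟨a, rfl⟩ _ ⟨a', rfl⟩
    refine ⟨a + a', ?_⟩
    ext z
    simp only [hexpC, ContinuousMap.coe_mk, ContinuousMap.mul_apply]
    rw [inner_add_left, Real.exp_add]
  have honemem : (1 : C(Z, ℝ)) ∈ expSet := by
    refine ⟨0, ?_⟩
    ext z
    simp [hexpC]
  have hspan_adjoin : Subalgebra.toSubmodule (Algebra.adjoin ℝ expSet)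
      = Submodule.span ℝ expSet := by
    apply Algebra.adjoin_eq_span_of_subset
    intro x hx
    have hsub : Submonoid.closure expSet ≤ Submonoid.mk ⟨expSet, fun {a b} ha hb =>
        hmulmem a ha b hb⟩ honemem := by
      apply Submonoid.closure_le.mpr
      exact le_refl _
    exact Submodule.subset_span (hsub hx)
  have hsep : (Algebra.adjoin ℝ expSet).SeparatesPoints := by
    intro z w hzw
    set a : EuclideanSpace ℝ (Fin m) :=
      (z : EuclideanSpace ℝ (Fin m)) - (w : EuclideanSpace ℝ (Fin m)) with hadef
    have ha : a ≠ 0 := sub_ne_zero.mpr (Subtype.coe_injective.ne hzw)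
    refine ⟨(expC a : Z → ℝ), ⟨expC a, Algebra.subset_adjoin ⟨a, rfl⟩, rfl⟩, ?_⟩
    have hlt : ⟪a, (w : EuclideanSpace ℝ (Fin m))⟫ < ⟪a, (z : EuclideanSpace ℝ (Fin m))⟫ := by
      have h1 : ⟪a, (z : EuclideanSpace ℝ (Fin m))⟫ - ⟪a, (w : EuclideanSpace ℝ (Fin m))⟫
          = ⟪a, a⟫ := by rw [← inner_sub_right]
      have h2 : (0:ℝ) < ⟪a, a⟫ := by
        rw [real_inner_self_eq_norm_sq]
        have h3 : 0 < ‖a‖ := norm_pos_iff.mpr ha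
        positivity
      linarith
    have : Real.exp ⟪a, (w : EuclideanSpace ℝ (Fin m))⟫
        < Real.exp ⟪a, (z : EuclideanSpace ℝ (Fin m))⟫ := Real.exp_lt_exp.mpr hlt
    exact ne_of_gt this
  obtain ⟨⟨F0, hF0A⟩, hF0near⟩ :=
    ContinuousMap.exists_mem_subalgebra_near_continuousMap_of_separatesPoints
      (Algebra.adjoin ℝ expSet) hsep ⟨Z.restrict f, hf.restrict⟩ (ε/2) (by linarith)
  rw [ContinuousMap.norm_lt_iff _ (by linarith : (0:ℝ) < ε/2)] at hF0near
  have hF0span : F0 ∈ Submodule.span ℝ expSet := by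
    have h1 : F0 ∈ Subalgebra.toSubmodule (Algebra.adjoin ℝ expSet) := hF0A
    rwa [hspan_adjoin] at h1
  obtain ⟨n1, c1, G1, hsum1⟩ := Submodule.mem_span_set'.mp hF0span
  have hG1a : ∀ i, ∃ a, expC a = (G1 i : C(Z, ℝ)) := fun i => (G1 i).2
  choose aa haa using hG1a
  set c1s : ℝ := ∑ i, |c1 i| with hc1s
  have hc1s0 : 0 ≤ c1s := Finset.sum_nonneg fun i _ => abs_nonneg _
  set δ1 : ℝ := ε / (4 * (c1s + 1)) with hδ1def
  have hδ1 : 0 < δ1 := by positivity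
  have hterm : ∀ i : Fin n1, ∃ G ∈ CCUniv.VZ σ m, ∀ x ∈ Z, |Real.exp ⟪aa i, x⟫ - G x| ≤ δ1 :=
    fun i => hexp (aa i) δ1 hδ1
  choose GG hGGmem hGG using hterm
  have hGtotmem : (∑ i, c1 i • GG i) ∈ CCUniv.VZ σ m :=
    Submodule.sum_mem _ fun i _ => Submodule.smul_mem _ _ (hGGmem i)
  obtain ⟨n, c, Fs, hsum⟩ := Submodule.mem_span_set'.mp hGtotmem
  have hFs : ∀ i, ∃ a b, (Fs i : EuclideanSpace ℝ (Fin m) → ℝ)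
      = fun x => σ (⟪a, x⟫ - b) := fun i => (Fs i).2
  choose A B hAB using hFs
  refine ⟨n, c, A, B, fun x hx => ?_⟩
  -- evaluate everything at x
  have hval : ∑ i : Fin n, c i * σ (⟪A i, x⟫ - B i) = ∑ i : Fin n1, c1 i * GG i x := by
    have h1 := congrFun hsum x
    rw [Finset.sum_apply] at h1
    rw [Finset.sum_apply] at h1
    have h2 : ∑ i : Fin n, c i * σ (⟪A i, x⟫ - B i)
        = ∑ i : Fin n, (c i • (Fs i : EuclideanSpace ℝ (Fin m) → ℝ)) x := by
      apply Finset.sum_congr rfl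
      intro i _
      rw [Pi.smul_apply, smul_eq_mul, hAB i]
    rw [h2, h1]
    apply Finset.sum_congr rfl
    intro i _
    rw [Pi.smul_apply, smul_eq_mul]
  have hF0val : F0 ⟨x, hx⟩ = ∑ i : Fin n1, c1 i * Real.exp ⟪aa i, x⟫ := by
    have h1 := DFunLike.congr_fun hsum1 (⟨x, hx⟩ : Z)
    rw [← h1]
    rw [ContinuousMap.coe_sum, Finset.sum_apply]
    apply Finset.sum_congr rfl
    intro i _
    rw [ContinuousMap.coe_smul, Pi.smul_apply, smul_eq_mul, ← haa i]
    rfl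
  have hstep1 : |f x - F0 ⟨x, hx⟩| < ε / 2 := by
    have := hF0near ⟨x, hx⟩
    rw [Real.norm_eq_abs] at this
    rw [abs_sub_comm]
    simpa [Set.restrict] using this
  have hstep2 : |F0 ⟨x, hx⟩ - ∑ i : Fin n1, c1 i * GG i x| ≤ c1s * δ1 := by
    rw [hF0val]
    have h1 : (∑ i : Fin n1, c1 i * Real.exp ⟪aa i, x⟫) - ∑ i : Fin n1, c1 i * GG i x
        = ∑ i : Fin n1, c1 i * (Real.exp ⟪aa i, x⟫ - GG i x) := by
      rw [← Finset.sum_sub_distrib]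
      apply Finset.sum_congr rfl
      intro i _
      ring
    rw [h1]
    calc |∑ i : Fin n1, c1 i * (Real.exp ⟪aa i, x⟫ - GG i x)|
        ≤ ∑ i : Fin n1, |c1 i * (Real.exp ⟪aa i, x⟫ - GG i x)| := Finset.abs_sum_le_sum_abs _ _
      _ ≤ ∑ i : Fin n1, |c1 i| * δ1 := by
          apply Finset.sum_le_sum
          intro i _
          rw [abs_mul]
          exact mul_le_mul_of_nonneg_left (hGG i x hx) (abs_nonneg _)
      _ = c1s * δ1 := by rw [← Finset.sum_mul, hc1s]
  have hstep3 : c1s * δ1 ≤ ε / 4 := by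
    rw [hδ1def, mul_comm, div_mul_eq_mul_div, div_le_div_iff₀ (by positivity) (by norm_num)]
    nlinarith
  calc |f x - ∑ i : Fin n, c i * σ (⟪A i, x⟫ - B i)|
      = |f x - ∑ i : Fin n1, c1 i * GG i x| := by rw [hval]
    _ ≤ |f x - F0 ⟨x, hx⟩| + |F0 ⟨x, hx⟩ - ∑ i : Fin n1, c1 i * GG i x| := by
        have : f x - ∑ i : Fin n1, c1 i * GG i x
            = (f x - F0 ⟨x, hx⟩) + (F0 ⟨x, hx⟩ - ∑ i : Fin n1, c1 i * GG i x) := by ring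
        rw [this]
        exact abs_add_le _ _
    _ < ε / 2 + ε / 4 := by
        have := le_trans hstep2 hstep3
        linarith
    _ < ε := by linarith
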